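/- Let V and W be finite-dimensional vector spaces over an infinite field k and α, β : V → W linear maps with β(ker α) ∩ im α = {0}. Then for generic t ∈ k, rank(α + t·β) = rank α + rank(β restricted to ker α). -/

import Mathlib

open Module LinearMap Submodule Function

/-- Quantitative perturbation lemma: if `β (ker α) ⊓ range α = ⊥`, then for generic `t`,
`rank (α + t • β) = rank α + rank (β restricted to ker α)`. -/
theorem stmt1 {k V W : Type*} [Field k] [Infinite k]
    [AddCommGroup V] [Module k V] [FiniteDimensional k V]
    [AddCommGroup W] [Module k W] [FiniteDimensional k W]
    (α β : V →ₗ[k] W)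
    (h : (LinearMap.ker α).map β ⊓ LinearMap.range α = ⊥) :
    {t : k | Module.finrank k (LinearMap.range (α + t • β)) ≠
        Module.finrank k (LinearMap.range α) +
        Module.finrank k (LinearMap.range (β ∘ₗ (LinearMap.ker α).subtype))}.Finite := by
  classical
  set K := LinearMap.ker α with hKdef
  set A := LinearMap.range α with hAdef
  set B := K.map β with hBdef
  obtain ⟨K', hKc⟩ := K.exists_isCompl
  obtain ⟨D, hD⟩ := (A ⊔ B).exists_isCompl
  set C := A ⊔ D with hCdef
  have hAC : A ≤ C := le_sup_left
  have hBC : IsCompl B C := by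
    constructor
    · rw [disjoint_iff, eq_bot_iff]
      rintro w ⟨hwB, hwC⟩
      rw [hCdef] at hwC
      obtain ⟨a, ha, d, hd, rfl⟩ := Submodule.mem_sup.mp hwC
      have hdAB : d ∈ A ⊔ B := by
        have : d = (a + d) - a := by abel
        rw [this]
        exact sub_mem (le_sup_right (α := Submodule k W) hwB) (le_sup_left (α := Submodule k W) ha)
      have hd0 : d = 0 := by
        have := hD.disjoint.le_bot ⟨hdAB, hd⟩
        simpa using this
      subst hd0
      rw [add_zero] at hwB ⊢
      have : a ∈ B ⊓ A := ⟨hwB, ha⟩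
      rw [h] at this
      simpa using this
    · rw [codisjoint_iff]
      have := codisjoint_iff.mp hD.codisjoint
      rw [hCdef, ← this]
      rw [sup_comm B (A ⊔ D)]
      rw [sup_assoc, sup_comm D B, ← sup_assoc]
  set π : W →ₗ[k] C := C.linearProjOfIsCompl B hBC.symm with hπdef
  have hπB : ∀ w ∈ B, π w = 0 := fun w hw =>
    Submodule.projectionOnto_apply_of_mem_right hBC.symm (x := w) hw
  have hπC : ∀ w : C, π (w : W) = w := fun w =>
    Submodule.linearProjOfIsCompl_apply_left hBC.symm w
  set ι : K' →ₗ[k] V := K'.subtype with hιdef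
  set F0 : K' →ₗ[k] C := π ∘ₗ (α ∘ₗ ι) with hF0def
  have hF0inj : Function.Injective F0 := by
    rw [injective_iff_map_eq_zero]
    intro x hx
    have hmem : α (ι x) ∈ C := hAC ⟨ι x, rfl⟩
    have : π (α (ι x)) = (⟨α (ι x), hmem⟩ : C) := hπC ⟨α (ι x), hmem⟩
    have hα0 : α (ι x) = 0 := by
      have hx' : π (α (ι x)) = 0 := hx
      rw [this] at hx'
      exact congrArg Subtype.val hx'
    have hxK : (x : V) ∈ K := by rwa [hKdef, LinearMap.mem_ker]
    have : (x : V) ∈ K ⊓ K' := ⟨hxK, x.2⟩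
    rw [hKc.inf_eq_bot] at this
    exact Subtype.ext (by simpa using this)
  set R := LinearMap.range F0 with hRdef
  obtain ⟨R', hR⟩ := R.exists_isCompl
  set Q : C →ₗ[k] R := R.linearProjOfIsCompl R' hR with hQdef
  set G : K' →ₗ[k] R := Q ∘ₗ F0 with hGdef
  have hQF0 : ∀ x : K', Q (F0 x) = (⟨F0 x, ⟨x, rfl⟩⟩ : R) :=
    fun x => Submodule.linearProjOfIsCompl_apply_left hR ⟨F0 x, ⟨x, rfl⟩⟩
  have hGbij : Function.Bijective G := by
    constructor
    · rw [injective_iff_map_eq_zero]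
      intro x hx
      have : Q (F0 x) = 0 := hx
      rw [hQF0 x] at this
      have : F0 x = 0 := congrArg Subtype.val this
      exact hF0inj (by simpa using this)
    · rintro ⟨c, hc⟩
      obtain ⟨x, rfl⟩ := hc
      exact ⟨x, by rw [hGdef]; exact (hQF0 x).trans rfl⟩
  set E : K' ≃ₗ[k] R := LinearEquiv.ofBijective G hGbij with hEdef
  set M : K' →ₗ[k] R := Q ∘ₗ (π ∘ₗ (β ∘ₗ ι)) with hMdef
  set N : K' →ₗ[k] K' := E.symm.toLinearMap ∘ₗ M with hNdef
  -- the key injectivity statement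
  have hinj : ∀ t : k, t ≠ 0 → ¬ Module.End.HasEigenvalue N (-t⁻¹) →
      Function.Injective (π ∘ₗ ((α + t • β) ∘ₗ ι)) := by
    intro t ht heig
    rw [injective_iff_map_eq_zero]
    intro x hx
    by_contra hx0
    apply heig
    have hx' : π (α (ι x)) + t • π (β (ι x)) = 0 := by
      have : π ((α + t • β) (ι x)) = 0 := hx
      simpa [map_add, map_smul] using this
    have hQx : G x + t • M x = 0 := by
      have := congrArg Q hx'
      simpa [hGdef, hMdef, map_add, map_smul, hF0def] using this
    have hEx : E x = -(t • M x) := by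
      rw [eq_neg_iff_add_eq_zero]
      simpa [hEdef, LinearEquiv.ofBijective_apply] using hQx
    have hxeq : x = -(t • N x) := by
      have := congrArg E.symm hEx
      simpa [hNdef, map_neg, map_smul] using this
    have h5 : t • N x = -x := by
      have := congrArg Neg.neg hxeq
      rw [neg_neg] at this
      exact this.symm
    have hNx : N x = (-t⁻¹) • x := by
      have h6 : N x = t⁻¹ • (t • N x) := by
        rw [smul_smul, inv_mul_cancel₀ ht, one_smul]
      rw [h6, h5, smul_neg, neg_smul]
    exact Module.End.hasEigenvalue_of_hasEigenvector
      ⟨Module.End.mem_eigenspace_iff.mpr hNx, hx0⟩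
  -- the rank computation for good t
  have key : ∀ t : k, t ≠ 0 → Function.Injective (π ∘ₗ ((α + t • β) ∘ₗ ι)) →
      Module.finrank k (LinearMap.range (α + t • β)) =
        Module.finrank k A + Module.finrank k (LinearMap.range (β ∘ₗ K.subtype)) := by
    intro t ht hFt
    set f := α + t • β with hfdef
    have hfι : Function.Injective (f ∘ₗ ι) := by
      intro x y hxy
      exact hFt (by simp [LinearMap.comp_apply, hxy])
    -- range f = map f K' ⊔ B
    have hmapK : Submodule.map f K = B := by
      ext w
      simp only [Submodule.mem_map, hBdef]
      constructor
      · rintro ⟨x, hxK, rfl⟩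
        refine ⟨t • x, K.smul_mem t hxK, ?_⟩
        have hαx : α x = 0 := hxK
        simp [hfdef, hαx, map_smul]
      · rintro ⟨x, hxK, rfl⟩
        refine ⟨t⁻¹ • x, K.smul_mem t⁻¹ hxK, ?_⟩
        have hαx : α x = 0 := hxK
        simp [hfdef, hαx, map_smul, smul_smul, mul_inv_cancel₀ ht,
          inv_mul_cancel₀ ht]
    have hrange : LinearMap.range f = Submodule.map f K' ⊔ B := by
      rw [LinearMap.range_eq_map, ← codisjoint_iff.mp hKc.codisjoint,
        Submodule.map_sup, hmapK, sup_comm]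
    have hdisj : Submodule.map f K' ⊓ B = ⊥ := by
      rw [eq_bot_iff]
      rintro w ⟨hw1, hw2⟩
      obtain ⟨x, hxK', rfl⟩ := hw1
      have : π (f x) = 0 := hπB _ hw2
      have hx0 : (⟨x, hxK'⟩ : K') = 0 := by
        apply (injective_iff_map_eq_zero _).mp hFt
        exact this
      have : x = 0 := by simpa using congrArg Subtype.val hx0
      simp [this]
    have hmapK'eq : Submodule.map f K' = LinearMap.range (f ∘ₗ ι) := by
      rw [LinearMap.range_comp, hιdef, Submodule.range_subtype]
    have h1 : Module.finrank k (Submodule.map f K') = Module.finrank k K' := by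
      rw [hmapK'eq, LinearMap.finrank_range_of_inj hfι]
    have h2 : Module.finrank k K' = Module.finrank k A := by
      have e1 := Submodule.finrank_add_eq_of_isCompl hKc
      have e2 := LinearMap.finrank_range_add_finrank_ker α
      rw [← hAdef, ← hKdef] at e2
      omega
    have h3 : B = LinearMap.range (β ∘ₗ K.subtype) := by
      rw [LinearMap.range_comp, Submodule.range_subtype]
    have h4 := Submodule.finrank_sup_add_finrank_inf_eq (Submodule.map f K') B
    rw [hdisj, finrank_bot, add_zero] at h4
    rw [hrange, h4, h1, h2, h3]
  -- conclude
  apply Set.Finite.subset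
    (((Module.End.finite_hasEigenvalue N).image (fun μ => -μ⁻¹)).insert (0 : k))
  intro t ht
  rcases eq_or_ne t 0 with rfl | htne
  · exact Set.mem_insert _ _
  · right
    by_cases heig : Module.End.HasEigenvalue N (-t⁻¹)
    · exact ⟨-t⁻¹, heig, by show -(-t⁻¹)⁻¹ = t; rw [inv_neg, neg_neg, inv_inv]⟩
    · exact absurd (key t htne (hinj t htne heig)) ht
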